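/- Let \tilde L be a Lie ring with a Z/qZ-grading \tilde L = \bigoplus_{j=0}^{q-1} L_j (q prime), and suppose that for some integer n, every element x_0 \in L_0 satisfies [x_0,_n l] = 0 for all l \in \tilde L. Then every homogeneous element l_k \in L_k with k \not\equiv 0 (mod q) is ad-nilpotent of index at most q + n - 1. -/

import Mathlib

/-- Let `L` be a Lie ring with a `ℤ/qℤ`-grading `L = ⊕_j A j` (`q` prime), and
suppose every `x₀ ∈ A 0` satisfies `[x₀, n l] = 0` for all `l ∈ L`. Then every
homogeneous element `l ∈ A k` with `k ≠ 0` is ad-nilpotent of index at most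
`q + n - 1`. -/
theorem stmt9 {q : ℕ} (hq : q.Prime) {L : Type*} [LieRing L]
    (A : ZMod q → AddSubgroup L)
    (hgrade : ∀ i j : ZMod q, ∀ x ∈ A i, ∀ y ∈ A j, ⁅x, y⁆ ∈ A (i + j))
    (hspan : (⨆ i, A i) = (⊤ : AddSubgroup L))
    (n : ℕ)
    (h0 : ∀ x₀ ∈ A 0, ∀ l : L, (fun a => ⁅a, l⁆)^[n] x₀ = 0) :
    ∀ k : ZMod q, k ≠ 0 → ∀ l ∈ A k, ∀ x : L,
      (fun a => ⁅a, l⁆)^[q + n - 1] x = 0 := by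
  haveI : Fact q.Prime := ⟨hq⟩
  haveI : NeZero q := ⟨hq.ne_zero⟩
  intro k hk l hl x
  set f : L → L := fun a => ⁅a, l⁆ with hf
  -- additivity of iterates
  have hadd : ∀ m : ℕ, ∀ a b : L, f^[m] (a + b) = f^[m] a + f^[m] b := by
    intro m
    induction m with
    | zero => intro a b; simp
    | succ m ih =>
      intro a b
      rw [Function.iterate_succ_apply', Function.iterate_succ_apply',
        Function.iterate_succ_apply', ih, hf]
      simp [add_lie]
  have hzero : ∀ m : ℕ, f^[m] (0 : L) = 0 := fun m =>
    Function.iterate_fixed (by simp [hf]) m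
  -- iterates move grading
  have hmove : ∀ (j : ZMod q) (y : L), y ∈ A j → ∀ m : ℕ, f^[m] y ∈ A (j + m • k) := by
    intro j y hy m
    induction m with
    | zero => simpa using hy
    | succ m ih =>
      rw [Function.iterate_succ_apply']
      have := hgrade _ _ _ ih _ hl
      have heq : j + m • k + k = j + (m + 1) • k := by
        rw [succ_nsmul]; ring
      rwa [heq] at this
  -- homogeneous case
  have hhom : ∀ (j : ZMod q) (y : L), y ∈ A j → f^[q + n - 1] y = 0 := by
    intro j y hy
    set s : ZMod q := -j * k⁻¹ with hs
    have hsk : j + s.val • k = 0 := by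
      have hval : ((s.val : ZMod q)) = s := by rw [ZMod.natCast_val, ZMod.cast_id]
      rw [nsmul_eq_mul, hval, hs]
      field_simp
      ring
    have hy0 : f^[s.val] y ∈ A 0 := by
      have := hmove j y hy s.val
      rwa [hsk] at this
    have h1 : f^[s.val + n] y = 0 := by
      rw [add_comm, Function.iterate_add_apply]
      exact h0 _ hy0 l
    have hle : s.val + n ≤ q + n - 1 := by
      have := s.val_lt
      omega
    have : f^[(q + n - 1 - (s.val + n)) + (s.val + n)] y = 0 := by
      rw [Function.iterate_add_apply, h1, hzero]
    have harith : (q + n - 1 - (s.val + n)) + (s.val + n) = q + n - 1 := by omega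
    rwa [harith] at this
  -- extend to all of L by additivity
  have hx : x ∈ (⨆ i, A i : AddSubgroup L) := hspan ▸ AddSubgroup.mem_top x
  refine AddSubgroup.iSup_induction (C := fun y => f^[q + n - 1] y = 0) A hx (fun i y hy => hhom i y hy) (hzero _) ?_
  intro a b ha hb
  rw [hadd, ha, hb, add_zero]
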